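/- Let A be an n×n real symmetric matrix that is nonsingular, let x be a vector in ℝⁿ, and let B be the (n+1)×(n+1) symmetric matrix with block form B = [[xᵀAx, xᵀA],[Ax, A]]. Then rank(B) = rank(A) = n and spark(B) = |supp(x)| + 1, where |supp(x)| is the number of nonzero coordinates of x. -/
import Mathlib


open Matrix
open scoped Classical

/-- `A ∈ S(G)`: real symmetric matrices whose off-diagonal zero/nonzero pattern
is given by the adjacencies of `G`. -/
def SMatrixOf {V : Type*} [Fintype V] (G : SimpleGraph V) (A : Matrix V V ℝ) : Prop :=
  A.IsSymm ∧ ∀ i j, i ≠ j → (A i j ≠ 0 ↔ G.Adj i j)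

/-- A fort of `G`: a nonempty vertex set `F` such that no vertex outside `F`
is adjacent to exactly one vertex of `F`. -/
def IsFort {V : Type*} (G : SimpleGraph V) (F : Set V) : Prop :=
  F.Nonempty ∧ ∀ v ∉ F, ¬ ∃! w, w ∈ F ∧ G.Adj v w

/-- The spark of a square real matrix: the minimum number of nonzero coordinates
of a nonzero null vector; `card + 1` if the matrix is nonsingular. -/
noncomputable def Matrix.spark {V : Type*} [Fintype V] (A : Matrix V V ℝ) : ℕ :=
  if ∃ x : V → ℝ, x ≠ 0 ∧ A.mulVec x = 0 then
    sInf {k | ∃ x : V → ℝ, x ≠ 0 ∧ A.mulVec x = 0 ∧ {i | x i ≠ 0}.ncard = k}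
  else Fintype.card V + 1

/-- The spark of a graph. -/
noncomputable def sparkG {V : Type*} [Fintype V] (G : SimpleGraph V) : ℕ :=
  sInf {s | ∃ A, SMatrixOf G A ∧ A.spark = s}

/-- minimum degree -/
noncomputable def minDeg {V : Type*} (G : SimpleGraph V) : ℕ :=
  sInf {d | ∃ v, (G.neighborSet v).ncard = d}

/-- `G` is `k`-connected: more than `k` vertices, and removing fewer than `k`
vertices leaves a connected graph. -/
def IsKConnected {V : Type*} [Fintype V] (G : SimpleGraph V) (k : ℕ) : Prop :=
  k < Fintype.card V ∧ ∀ S : Set V, S.ncard < k → (G.induce Sᶜ).Connected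

/-- vertex connectivity -/
noncomputable def kappa {V : Type*} [Fintype V] (G : SimpleGraph V) : ℕ :=
  sSup {k | IsKConnected G k}

/-- minimum rank of a graph -/
noncomputable def mr {V : Type*} [Fintype V] (G : SimpleGraph V) : ℕ :=
  sInf {r | ∃ A, SMatrixOf G A ∧ A.rank = r}

/-- minimum semidefinite rank of a graph -/
noncomputable def mrPlus {V : Type*} [Fintype V] (G : SimpleGraph V) : ℕ :=
  sInf {r | ∃ A, SMatrixOf G A ∧ A.PosSemidef ∧ A.rank = r}

/-- nullity of a square matrix -/
noncomputable def nullity {V : Type*} [Fintype V] (A : Matrix V V ℝ) : ℕ :=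
  Module.finrank ℝ (LinearMap.ker A.mulVecLin)

/-- A matrix is generic if every square submatrix is nonsingular. -/
def IsGeneric {m p : Type*} (X : Matrix m p ℝ) : Prop :=
  ∀ (r : ℕ) (f : Fin r → m) (g : Fin r → p),
    Function.Injective f → Function.Injective g → (X.submatrix f g).det ≠ 0

/-- generic nullity of a matrix -/
noncomputable def GN {n : ℕ} (A : Matrix (Fin n) (Fin n) ℝ) : ℕ :=
  sSup {k | ∃ X : Matrix (Fin n) (Fin k) ℝ, IsGeneric X ∧ A * X = 0}

/-- maximum generic nullity of a graph -/
noncomputable def GM {n : ℕ} (G : SimpleGraph (Fin n)) : ℕ :=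
  sSup {m | ∃ A, SMatrixOf G A ∧ GN A = m}

/-- bordering a nonsingular symmetric matrix `A` by `x` preserves the rank
and gives spark equal to `|supp(x)| + 1`. -/
theorem stmt6 {n : ℕ} (A : Matrix (Fin n) (Fin n) ℝ) (hsym : A.IsSymm)
    (hns : IsUnit A.det) (x : Fin n → ℝ)
    (B : Matrix (Fin 1 ⊕ Fin n) (Fin 1 ⊕ Fin n) ℝ)
    (hB : B = Matrix.fromBlocks
      (Matrix.of fun _ _ => x ⬝ᵥ A.mulVec x)
      (Matrix.of fun _ j => Matrix.vecMul x A j)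
      (Matrix.of fun i _ => A.mulVec x i) A) :
    B.rank = A.rank ∧ A.rank = n ∧ B.spark = {i | x i ≠ 0}.ncard + 1 := by
  classical
  subst hB
  set B : Matrix (Fin 1 ⊕ Fin n) (Fin 1 ⊕ Fin n) ℝ := Matrix.fromBlocks
      (Matrix.of fun _ _ => x ⬝ᵥ A.mulVec x)
      (Matrix.of fun _ j => Matrix.vecMul x A j)
      (Matrix.of fun i _ => A.mulVec x i) A with hBdef
  have hAunit : IsUnit A := (Matrix.isUnit_iff_isUnit_det A).mpr hns
  have hAinv := A.invertibleOfIsUnitDet hns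
  set u : Fin 1 ⊕ Fin n → ℝ := Sum.elim (fun _ => 1) (fun i => -x i) with hu
  have hu0 : u ≠ 0 := by
    intro h
    have h1 : u (Sum.inl 0) = 0 := by rw [h]; rfl
    simp [hu] at h1
  have hmul : ∀ v : Fin 1 ⊕ Fin n → ℝ, B *ᵥ v =
      Sum.elim (fun _ => v (Sum.inl 0) * (x ⬝ᵥ A.mulVec x)
          + ∑ j, Matrix.vecMul x A j * v (Sum.inr j))
        (fun i => v (Sum.inl 0) * A.mulVec x i + ∑ j, A i j * v (Sum.inr j)) := by
    intro v
    funext w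
    cases w with
    | inl j =>
      simp [hBdef, Matrix.mulVec, dotProduct, Fintype.sum_sum_type,
        Fin.sum_univ_one]
      ring
    | inr i =>
      simp [hBdef, Matrix.mulVec, dotProduct, Fintype.sum_sum_type,
        Fin.sum_univ_one]
      ring
  have hvm : ∑ j, Matrix.vecMul x A j * (-x j) = -(x ⬝ᵥ A.mulVec x) := by
    rw [Matrix.dotProduct_mulVec, dotProduct, ← Finset.sum_neg_distrib]
    exact Finset.sum_congr rfl fun i _ => by ring
  have hAx : ∀ i, ∑ j, A i j * (-x j) = -(A.mulVec x i) := by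
    intro i
    rw [Matrix.mulVec, dotProduct, ← Finset.sum_neg_distrib]
    exact Finset.sum_congr rfl fun k _ => by ring
  have hBu : B *ᵥ u = 0 := by
    rw [hmul u]
    funext w
    cases w with
    | inl j =>
      show u (Sum.inl 0) * (x ⬝ᵥ A.mulVec x)
          + ∑ j, Matrix.vecMul x A j * u (Sum.inr j) = 0
      have : u (Sum.inl 0) = 1 := rfl
      rw [this]
      simp only [show ∀ j, u (Sum.inr j) = -x j from fun _ => rfl]
      rw [hvm]
      ring
    | inr i =>
      show u (Sum.inl 0) * A.mulVec x i + ∑ j, A i j * u (Sum.inr j) = 0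
      have h0 : u (Sum.inl 0) = 1 := rfl
      rw [h0]
      simp only [show ∀ j, u (Sum.inr j) = -x j from fun _ => rfl]
      rw [hAx i]
      ring
  have hker : ∀ v : Fin 1 ⊕ Fin n → ℝ, B *ᵥ v = 0 ↔ v = v (Sum.inl 0) • u := by
    intro v
    constructor
    · intro hv
      rw [hmul v] at hv
      have hinr : A *ᵥ (v (Sum.inl 0) • x + v ∘ Sum.inr) = 0 := by
        funext i
        have h1 := congrFun hv (Sum.inr i)
        simp only [Sum.elim_inr, Pi.zero_apply] at h1
        show (A.mulVec (v (Sum.inl 0) • x + v ∘ Sum.inr)) i = 0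
        rw [Matrix.mulVec_add, Matrix.mulVec_smul]
        simp only [Pi.add_apply, Pi.smul_apply, smul_eq_mul]
        exact h1
      have hinj : Function.Injective A.mulVec := A.mulVec_injective_of_invertible
      have h2 : v (Sum.inl 0) • x + v ∘ Sum.inr = 0 := by
        apply hinj
        rw [hinr, Matrix.mulVec_zero]
      funext w
      cases w with
      | inl j =>
        have : j = 0 := Subsingleton.elim _ _
        subst this
        simp [hu]
      | inr i =>
        have h3 := congrFun h2 i
        simp only [Pi.add_apply, Pi.smul_apply, Function.comp_apply, Pi.zero_apply,
          smul_eq_mul] at h3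
        simp [hu]
        linarith
    · intro hveq
      rw [hveq, Matrix.mulVec_smul, hBu, smul_zero]
  have hkerSet : LinearMap.ker B.mulVecLin = Submodule.span ℝ {u} := by
    ext v
    simp only [LinearMap.mem_ker, Matrix.mulVecLin_apply, Submodule.mem_span_singleton]
    rw [hker v]
    constructor
    · intro h; exact ⟨v (Sum.inl 0), h.symm⟩
    · rintro ⟨c, rfl⟩
      simp [hu]
  have hrankA : A.rank = n := by
    rw [A.rank_of_isUnit hAunit, Fintype.card_fin]
  have hrankB : B.rank = n := by
    have h := LinearMap.finrank_range_add_finrank_ker B.mulVecLin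
    rw [hkerSet, finrank_span_singleton hu0] at h
    have hd : Module.finrank ℝ ((Fin 1 ⊕ Fin n) → ℝ) = n + 1 := by
      rw [Module.finrank_pi]
      simp [Fintype.card_sum]
      omega
    rw [hd] at h
    have : Matrix.rank B = Module.finrank ℝ (LinearMap.range B.mulVecLin) := rfl
    omega
  refine ⟨by rw [hrankA, hrankB], hrankA, ?_⟩
  have hsupp_u : {w | u w ≠ 0} = {Sum.inl 0} ∪ Sum.inr '' {i | x i ≠ 0} := by
    ext w
    cases w with
    | inl j =>
      have : j = 0 := Subsingleton.elim _ _
      subst this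
      simp [hu]
    | inr i =>
      simp [hu]
  have hcard_u : {w | u w ≠ 0}.ncard = {i | x i ≠ 0}.ncard + 1 := by
    rw [hsupp_u, Set.ncard_union_eq (by simp [Set.disjoint_left])
      (Set.toFinite _) (Set.toFinite _), Set.ncard_singleton,
      Set.ncard_image_of_injective _ Sum.inr_injective]
    omega
  have hex : ∃ v : (Fin 1 ⊕ Fin n) → ℝ, v ≠ 0 ∧ B.mulVec v = 0 := ⟨u, hu0, hBu⟩
  have hset : {k | ∃ v : (Fin 1 ⊕ Fin n) → ℝ, v ≠ 0 ∧ B.mulVec v = 0 ∧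
      {w | v w ≠ 0}.ncard = k} = {({i | x i ≠ 0}.ncard + 1)} := by
    ext k
    simp only [Set.mem_setOf_eq, Set.mem_singleton_iff]
    constructor
    · rintro ⟨v, hv0, hvB, rfl⟩
      have hveq := (hker v).1 hvB
      have ha : v (Sum.inl 0) ≠ 0 := by
        intro h
        exact hv0 (by rw [hveq, h, zero_smul])
      have : {w | v w ≠ 0} = {w | u w ≠ 0} := by
        ext w
        rw [hveq]
        simp [ha]
      rw [this, hcard_u]
    · rintro rfl
      exact ⟨u, hu0, hBu, hcard_u⟩
  rw [Matrix.spark, if_pos hex, hset, csInf_singleton]
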